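/- Let G : ℝ → ℝ satisfy 0 ≤ G(p) ≤ 1 for all p, and suppose the set {p·(1−G(p)) : p ≥ 0} is bounded above. Define V_0 = 0 and V_{k+1} = sup_{p ≥ 0} ( p·(1−G(p)) + G(p)·V_k ) for k ≥ 0. Then for every integer n ≥ 1, the optimal discriminatory revenue satisfies sup{ R^d_n(p⃗) : p⃗ ∈ ℝ_{≥0}^n } = V_n; that is, the optimal discriminatory prices are characterized by backward induction, the price offered to a bidder depending only on the number of bidders remaining after it. -/

import Mathlib

theorem prod_Iio_succ_aux (n : ℕ) (i : Fin n) (f : Fin (n+1) → ℝ) :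
    ∏ j ∈ Finset.Iio i.succ, f j = f 0 * ∏ j ∈ Finset.Iio i, f j.succ := by
  have h : Finset.Iio i.succ = insert (0 : Fin (n+1)) ((Finset.Iio i).map (Fin.succEmb n)) := by
    ext j
    simp only [Finset.mem_Iio, Finset.mem_insert, Finset.mem_map, Fin.coe_succEmb]
    induction j using Fin.cases with
    | zero => simp [Fin.succ_pos]
    | succ k =>
      rw [Fin.succ_lt_succ_iff]
      constructor
      · intro hk
        exact Or.inr ⟨k, hk, rfl⟩
      · rintro (hk | ⟨m, hm, hmk⟩)
        · exact absurd hk (Fin.succ_ne_zero k)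
        · rwa [← Fin.succ_injective _ hmk]
  rw [h, Finset.prod_insert, Finset.prod_map]
  · rfl
  · simp only [Finset.mem_map, Fin.coe_succEmb, not_exists]
    rintro x ⟨_, hx⟩
    exact Fin.succ_ne_zero x hx

theorem sum_succ_eq_aux (G : ℝ → ℝ) (n : ℕ) (pv : Fin (n+1) → ℝ) :
    ∑ i, pv i * (1 - G (pv i)) * ∏ j ∈ Finset.Iio i, G (pv j)
      = pv 0 * (1 - G (pv 0)) +
        G (pv 0) * ∑ i : Fin n, pv i.succ * (1 - G (pv i.succ)) *
          ∏ j ∈ Finset.Iio i, G (pv j.succ) := by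
  rw [Fin.sum_univ_succ]
  have h0 : ∏ j ∈ Finset.Iio (0 : Fin (n+1)), G (pv j) = 1 :=
    Finset.prod_eq_one fun j hj => absurd (Finset.mem_Iio.mp hj) (Fin.not_lt.mpr (Fin.zero_le j))
  rw [h0, Finset.mul_sum]
  congr 1
  · ring
  · refine Finset.sum_congr rfl fun i _ => ?_
    rw [prod_Iio_succ_aux n i (fun j => G (pv j))]
    ring

theorem stmt_17 (G : ℝ → ℝ) (hG0 : ∀ p : ℝ, 0 ≤ G p) (hG1 : ∀ p : ℝ, G p ≤ 1)
    (hbdd : BddAbove {r : ℝ | ∃ p : ℝ, 0 ≤ p ∧ r = p * (1 - G p)})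
    (V : ℕ → ℝ) (hV0 : V 0 = 0)
    (hVrec : ∀ k : ℕ,
      V (k + 1) = sSup {r : ℝ | ∃ p : ℝ, 0 ≤ p ∧ r = p * (1 - G p) + G p * V k}) :
    ∀ n : ℕ, 1 ≤ n →
      sSup {r : ℝ | ∃ pv : Fin n → ℝ, (∀ i, 0 ≤ pv i) ∧
          r = ∑ i, pv i * (1 - G (pv i)) * ∏ j ∈ Finset.Iio i, G (pv j)} = V n := by
  set S : ℕ → Set ℝ := fun n => {r : ℝ | ∃ pv : Fin n → ℝ, (∀ i, 0 ≤ pv i) ∧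
      r = ∑ i, pv i * (1 - G (pv i)) * ∏ j ∈ Finset.Iio i, G (pv j)} with hS
  -- basic facts
  obtain ⟨M, hM⟩ := hbdd
  have hMle : ∀ p : ℝ, 0 ≤ p → p * (1 - G p) ≤ M := fun p hp => hM ⟨p, hp, rfl⟩
  have hzero : ∀ n, (0 : ℝ) ∈ S n := by
    intro n
    exact ⟨fun _ => 0, fun _ => le_refl 0, by simp⟩
  have hnonneg : ∀ n, ∀ r ∈ S n, 0 ≤ r := by
    rintro n r ⟨pv, hpv, rfl⟩
    refine Finset.sum_nonneg fun i _ => ?_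
    exact mul_nonneg (mul_nonneg (hpv i) (sub_nonneg.2 (hG1 _)))
      (Finset.prod_nonneg fun j _ => hG0 _)
  have hmem : ∀ n, ∀ p : ℝ, 0 ≤ p → ∀ t ∈ S n, p * (1 - G p) + G p * t ∈ S (n+1) := by
    rintro n p hp t ⟨pv, hpv, rfl⟩
    refine ⟨Fin.cons p pv, ?_, ?_⟩
    · intro i
      induction i using Fin.cases with
      | zero => simpa using hp
      | succ k => simpa using hpv k
    · rw [sum_succ_eq_aux]
      simp [Fin.cons_zero, Fin.cons_succ]
  have hdecomp : ∀ n, ∀ r ∈ S (n+1), ∃ p : ℝ, 0 ≤ p ∧ ∃ t ∈ S n,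
      r = p * (1 - G p) + G p * t := by
    rintro n r ⟨pv, hpv, rfl⟩
    refine ⟨pv 0, hpv 0, ∑ i : Fin n, pv i.succ * (1 - G (pv i.succ)) *
      ∏ j ∈ Finset.Iio i, G (pv j.succ), ⟨fun i => pv i.succ, fun i => hpv _, rfl⟩, ?_⟩
    exact sum_succ_eq_aux G n pv
  -- main induction
  have hmain : ∀ n : ℕ, BddAbove (S n) ∧ sSup (S n) = V n := by
    intro n
    induction n with
    | zero =>
      have h0 : S 0 = {0} := by
        ext r
        constructor
        · rintro ⟨pv, _, rfl⟩
          simp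
        · rintro rfl
          exact hzero 0
      rw [h0]
      exact ⟨bddAbove_singleton, by rw [csSup_singleton, hV0]⟩
    | succ n ih =>
      obtain ⟨hbn, hsn⟩ := ih
      have hVn : 0 ≤ V n := hsn ▸ le_csSup hbn (hzero n)
      have hbsucc : BddAbove (S (n+1)) := by
        refine ⟨M + V n, ?_⟩
        intro r hr
        obtain ⟨p, hp, t, ht, rfl⟩ := hdecomp n r hr
        have h1 : G p * t ≤ V n := by
          calc G p * t ≤ 1 * t := by
                have := hnonneg n t ht
                exact mul_le_mul_of_nonneg_right (hG1 p) this
            _ = t := one_mul t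
            _ ≤ V n := hsn ▸ le_csSup hbn ht
        exact add_le_add (hMle p hp) h1
      refine ⟨hbsucc, ?_⟩
      have hVbdd : BddAbove {r : ℝ | ∃ p : ℝ, 0 ≤ p ∧ r = p * (1 - G p) + G p * V n} := by
        refine ⟨M + V n, ?_⟩
        rintro r ⟨p, hp, rfl⟩
        refine add_le_add (hMle p hp) ?_
        calc G p * V n ≤ 1 * V n := mul_le_mul_of_nonneg_right (hG1 p) hVn
          _ = V n := one_mul _
      apply le_antisymm
      · apply csSup_le ⟨0, hzero (n+1)⟩
        intro r hr
        obtain ⟨p, hp, t, ht, rfl⟩ := hdecomp n r hr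
        have h1 : G p * t ≤ G p * V n :=
          mul_le_mul_of_nonneg_left (hsn ▸ le_csSup hbn ht) (hG0 p)
        calc p * (1 - G p) + G p * t ≤ p * (1 - G p) + G p * V n := by linarith
          _ ≤ V (n+1) := by
              rw [hVrec n]
              exact le_csSup hVbdd ⟨p, hp, rfl⟩
      · rw [hVrec n]
        refine csSup_le ⟨0 * (1 - G 0) + G 0 * V n, ⟨0, le_refl 0, rfl⟩⟩ ?_
        rintro r ⟨p, hp, rfl⟩
        rcases eq_or_lt_of_le (hG0 p) with hgz | hgp
        · have : p * (1 - G p) + G p * V n = p * (1 - G p) + G p * 0 := by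
            rw [← hgz]; ring
          rw [this]
          exact le_csSup hbsucc (hmem n p hp 0 (hzero n))
        · have key : sSup (S n) ≤ (sSup (S (n+1)) - p * (1 - G p)) / G p := by
            apply csSup_le ⟨0, hzero n⟩
            intro t ht
            rw [le_div_iff₀ hgp]
            have := le_csSup hbsucc (hmem n p hp t ht)
            linarith [mul_comm t (G p)]
          rw [← hsn]
          have := (le_div_iff₀ hgp).mp key
          linarith [mul_comm (sSup (S n)) (G p)]
  intro n _
  exact (hmain n).2
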